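/- Let b_1 > 0, b_2 > 0, b_3 ≥ 0, and assume b_2·λ > b_3 for every eigenvalue λ of Q_S for every nonempty S ⊆ V (so b_1 Q_S and b_2 Q_S − b_3 I are invertible for every nonempty S). Define the set function f on subsets of V by f(∅) = 0 and, for nonempty S, f(S) = C − tr( (b_1 Q_S)⁻¹ (b_2 Q_S − b_3 I)⁻¹ ), where C = 2·max over single nodes s ∈ V of tr( (b_1 Q_{{s}})⁻¹ (b_2 Q_{{s}} − b_3 I)⁻¹ ). Then f is non-decreasing and submodular. -/

import Mathlib

open Matrix Set Pointwise

namespace SMAux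

variable {n : ℕ}

/-! ### Entrywise nonnegativity helpers -/

lemma mul_nn {A B : Matrix (Fin n) (Fin n) ℝ} (hA : ∀ p q, 0 ≤ A p q)
    (hB : ∀ p q, 0 ≤ B p q) : ∀ p q, 0 ≤ (A * B) p q := by
  intro p q
  rw [Matrix.mul_apply]
  exact Finset.sum_nonneg fun r _ => mul_nonneg (hA p r) (hB r q)

lemma trace_nn {A : Matrix (Fin n) (Fin n) ℝ} (hA : ∀ p q, 0 ≤ A p q) :
    0 ≤ A.trace := by
  rw [Matrix.trace]
  exact Finset.sum_nonneg fun r _ => hA r r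

lemma diag_nn {d : Fin n → ℝ} (hd : ∀ p, 0 ≤ d p) :
    ∀ p q, 0 ≤ (Matrix.diagonal d) p q := by
  intro p q
  rcases eq_or_ne p q with rfl | h
  · simpa using hd p
  · simp [Matrix.diagonal_apply_ne _ h]

/-! ### Inverse of a positive definite Z-matrix is entrywise nonnegative -/

lemma inv_entry_nonneg {N : Matrix (Fin n) (Fin n) ℝ} (hN : N.PosDef)
    (hoff : ∀ p q, p ≠ q → N p q ≤ 0) (p q : Fin n) : 0 ≤ N⁻¹ p q := by
  have hdet : IsUnit N.det := (Matrix.isUnit_iff_isUnit_det N).mp hN.isUnit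
  set x : Fin n → ℝ := N⁻¹ *ᵥ Pi.single q 1 with hxdef
  have hNx : N *ᵥ x = Pi.single q 1 := by
    rw [hxdef, Matrix.mulVec_mulVec, Matrix.mul_nonsing_inv _ hdet, Matrix.one_mulVec]
  set y : Fin n → ℝ := fun r => max (-(x r)) 0 with hydef
  set z : Fin n → ℝ := fun r => max (x r) 0 with hzdef
  have hy0 : ∀ r, 0 ≤ y r := fun r => le_max_right _ _
  have hz0 : ∀ r, 0 ≤ z r := fun r => le_max_right _ _
  have hyz : ∀ r, y r * z r = 0 := by
    intro r
    rcases le_total (x r) 0 with h | h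
    · have : z r = 0 := max_eq_right h
      rw [this, mul_zero]
    · have : y r = 0 := max_eq_right (neg_nonpos.mpr h)
      rw [this, zero_mul]
  have hxzy : x = z - y := by
    funext r
    simp only [Pi.sub_apply, hydef, hzdef]
    rcases le_total (x r) 0 with h | h
    · rw [max_eq_right h, max_eq_left (neg_nonneg.mpr h)]; ring
    · rw [max_eq_left h, max_eq_right (neg_nonpos.mpr h)]; ring
  -- y ⬝ᵥ (N *ᵥ z) ≤ 0
  have hyNz : y ⬝ᵥ (N *ᵥ z) ≤ 0 := by
    have hexp : y ⬝ᵥ (N *ᵥ z) = ∑ r, ∑ s, y r * (N r s * z s) := by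
      simp [dotProduct, Matrix.mulVec, Finset.mul_sum]
    rw [hexp]
    apply Finset.sum_nonpos
    intro r _
    apply Finset.sum_nonpos
    intro s _
    rcases eq_or_ne r s with rfl | hrs
    · have : y r * (N r r * z r) = N r r * (y r * z r) := by ring
      rw [this, hyz r, mul_zero]
    · exact mul_nonpos_of_nonneg_of_nonpos (hy0 r)
        (mul_nonpos_of_nonpos_of_nonneg (hoff r s hrs) (hz0 s))
  have hyq : (0:ℝ) ≤ y ⬝ᵥ Pi.single q 1 := by
    simp [dotProduct, Pi.single_apply]
    positivity
  have hkey : y ⬝ᵥ (N *ᵥ y) ≤ 0 := by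
    have h1 : y ⬝ᵥ (N *ᵥ x) = y ⬝ᵥ (N *ᵥ z) - y ⬝ᵥ (N *ᵥ y) := by
      rw [hxzy, Matrix.mulVec_sub, dotProduct_sub]
    have h2 : y ⬝ᵥ (N *ᵥ x) = y ⬝ᵥ Pi.single q 1 := by rw [hNx]
    linarith
  have hy : y = 0 := by
    by_contra hy
    have := hN.dotProduct_mulVec_pos hy
    have hstar : star y = y := by
      funext r; simp
    rw [hstar] at this
    linarith
  have hxz : x = z := by rw [hxzy, hy]; simp
  have hxp : N⁻¹ p q = x p := by
    rw [hxdef]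
    simp [Matrix.mulVec, dotProduct, Pi.single_apply]
  rw [hxp, hxz]
  exact hz0 p

end SMAux

namespace SMAux3

attribute [local instance] Matrix.linftyOpNormedRing Matrix.linftyOpNormedAlgebra

variable {n : ℕ}

noncomputable def trCLM (n : ℕ) : Matrix (Fin n) (Fin n) ℝ →L[ℝ] ℝ :=
  LinearMap.toContinuousLinearMap (Matrix.traceLinearMap (Fin n) ℝ ℝ)

@[simp] lemma trCLM_apply (A : Matrix (Fin n) (Fin n) ℝ) : trCLM n A = A.trace := by
  simp [trCLM]

lemma hasDerivAt_ringInverse_path (V D : Matrix (Fin n) (Fin n) ℝ) (t : ℝ)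
    (h : IsUnit (V + t • D)) :
    HasDerivAt (fun x : ℝ => Ring.inverse (V + x • D))
      (-(Ring.inverse (V + t • D) * D * Ring.inverse (V + t • D))) t := by
  obtain ⟨u, hu⟩ := h
  have hpath : HasDerivAt (fun x : ℝ => V + x • D) D t := by
    have h := (hasDerivAt_const t V).add ((hasDerivAt_id t).smul_const D)
    rw [zero_add, one_smul] at h
    exact h
  have hinv : HasFDerivAt Ring.inverse
      (-ContinuousLinearMap.mulLeftRight ℝ (Matrix (Fin n) (Fin n) ℝ) (↑u⁻¹) (↑u⁻¹))
      (V + t • D) := by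
    rw [← hu]
    exact hasFDerivAt_ringInverse u
  have hcomp := hinv.comp_hasDerivAt t hpath
  have hval : Ring.inverse (V + t • D) = (↑u⁻¹ : Matrix (Fin n) (Fin n) ℝ) := by
    rw [← hu, Ring.inverse_unit]
  refine HasDerivAt.congr_deriv hcomp ?_
  simp [hval, ContinuousLinearMap.mulLeftRight_apply]

end SMAux3

namespace SMAux3B
open SMAux3

attribute [local instance] Matrix.linftyOpNormedRing Matrix.linftyOpNormedAlgebra

variable {n : ℕ}

noncomputable def tauR (c : ℝ) (W : Matrix (Fin n) (Fin n) ℝ) : ℝ :=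
  Matrix.trace (Ring.inverse W * Ring.inverse (W - c • 1))

noncomputable def mRfun (c : ℝ) (E W : Matrix (Fin n) (Fin n) ℝ) : ℝ :=
  Matrix.trace (Ring.inverse W * E * Ring.inverse W * Ring.inverse (W - c • 1)) +
  Matrix.trace (Ring.inverse W * Ring.inverse (W - c • 1) * E * Ring.inverse (W - c • 1))

lemma hasDerivAt_tauR (c : ℝ) (W D : Matrix (Fin n) (Fin n) ℝ) (t : ℝ)
    (h1 : IsUnit (W + t • D)) (h2 : IsUnit (W + t • D - c • 1)) :
    HasDerivAt (fun x : ℝ => tauR c (W + x • D)) (-(mRfun c D (W + t • D))) t := by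
  set A := Ring.inverse (W + t • D) with hAdef
  set B := Ring.inverse (W + t • D - c • 1) with hBdef
  have hA : HasDerivAt (fun x : ℝ => Ring.inverse (W + x • D)) (-(A * D * A)) t :=
    hasDerivAt_ringInverse_path W D t h1
  have h2' : IsUnit (W - c • 1 + t • D) := by
    rw [← add_sub_right_comm]; exact h2
  have hB0 := hasDerivAt_ringInverse_path (W - c • 1) D t h2'
  rw [← add_sub_right_comm] at hB0
  have hfeq : (fun x : ℝ => Ring.inverse (W - c • 1 + x • D)) =
      fun x : ℝ => Ring.inverse (W + x • D - c • 1) := by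
    funext x; rw [add_sub_right_comm]
  rw [hfeq] at hB0
  have hAB := hA.mul hB0
  have htr := (trCLM n).hasFDerivAt.comp_hasDerivAt t hAB
  have hgoal : (fun x : ℝ => tauR c (W + x • D)) =
      fun x : ℝ => trCLM n (Ring.inverse (W + x • D) * Ring.inverse (W + x • D - c • 1)) := by
    funext x; simp [tauR]
  rw [hgoal]
  refine HasDerivAt.congr_deriv htr ?_
  simp only [trCLM_apply, mRfun, ← hAdef, ← hBdef]
  erw [trCLM_apply]
  rw [Matrix.trace_add]
  simp only [Matrix.neg_mul, Matrix.mul_neg, Matrix.trace_neg, Matrix.mul_assoc]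
  ring

lemma mR_deriv (c : ℝ) (W D E : Matrix (Fin n) (Fin n) ℝ) (t : ℝ)
    (h1 : IsUnit (W + t • D)) (h2 : IsUnit (W + t • D - c • 1))
    (hD : ∀ p q, 0 ≤ D p q) (hE : ∀ p q, 0 ≤ E p q)
    (hA : ∀ p q, 0 ≤ Ring.inverse (W + t • D) p q)
    (hB : ∀ p q, 0 ≤ Ring.inverse (W + t • D - c • 1) p q) :
    ∃ δ : ℝ, δ ≤ 0 ∧ HasDerivAt (fun x : ℝ => mRfun c E (W + x • D)) δ t := by
  set A := Ring.inverse (W + t • D) with hAdef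
  set B := Ring.inverse (W + t • D - c • 1) with hBdef
  have hAd : HasDerivAt (fun x : ℝ => Ring.inverse (W + x • D)) (-(A * D * A)) t :=
    hasDerivAt_ringInverse_path W D t h1
  have h2' : IsUnit (W - c • 1 + t • D) := by
    rw [← add_sub_right_comm]; exact h2
  have hBd := hasDerivAt_ringInverse_path (W - c • 1) D t h2'
  rw [← add_sub_right_comm] at hBd
  have hfeq : (fun x : ℝ => Ring.inverse (W - c • 1 + x • D)) =
      fun x : ℝ => Ring.inverse (W + x • D - c • 1) := by
    funext x; rw [add_sub_right_comm]
  rw [hfeq] at hBd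
  -- first summand : trace (A * E * A * B)
  have hm1 := (((hAd.mul_const E).mul hAd).mul hBd)
  have hm2 := ((hAd.mul hBd).mul_const E).mul hBd
  have hsum := ((trCLM n).hasFDerivAt.comp_hasDerivAt t hm1).add
    ((trCLM n).hasFDerivAt.comp_hasDerivAt t hm2)
  have hgoal : (fun x : ℝ => mRfun c E (W + x • D)) =
      fun x : ℝ =>
        trCLM n (Ring.inverse (W + x • D) * E * Ring.inverse (W + x • D) *
          Ring.inverse (W + x • D - c • 1)) +
        trCLM n (Ring.inverse (W + x • D) * Ring.inverse (W + x • D - c • 1) * E *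
          Ring.inverse (W + x • D - c • 1)) := by
    funext x; simp [mRfun]
  have hsum2 : HasDerivAt (fun x : ℝ => mRfun c E (W + x • D))
      ((trCLM n) ((-(A * D * A) * E * A + A * E * -(A * D * A)) * B +
          A * E * A * -(B * D * B)) +
        (trCLM n) ((-(A * D * A) * B + A * -(B * D * B)) * E * B +
          A * B * E * -(B * D * B))) t := by
    rw [hgoal]; exact hsum
  refine ⟨_, ?_, hsum2⟩
  · -- sign of the derivative
    have nn_mul := fun {X Y : Matrix (Fin n) (Fin n) ℝ} hX hY => SMAux.mul_nn (n := n) (A := X) (B := Y) hX hY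
    have t1 : 0 ≤ (A * D * A * E * A * B).trace :=
      SMAux.trace_nn (nn_mul (nn_mul (nn_mul (nn_mul (nn_mul hA hD) hA) hE) hA) hB)
    have t2 : 0 ≤ (A * E * (A * D * A) * B).trace :=
      SMAux.trace_nn (nn_mul (nn_mul (nn_mul hA hE) (nn_mul (nn_mul hA hD) hA)) hB)
    have t3 : 0 ≤ (A * E * A * (B * D * B)).trace :=
      SMAux.trace_nn (nn_mul (nn_mul (nn_mul hA hE) hA) (nn_mul (nn_mul hB hD) hB))
    have t4 : 0 ≤ (A * D * A * B * E * B).trace :=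
      SMAux.trace_nn (nn_mul (nn_mul (nn_mul (nn_mul (nn_mul hA hD) hA) hB) hE) hB)
    have t5 : 0 ≤ (A * (B * D * B) * E * B).trace :=
      SMAux.trace_nn (nn_mul (nn_mul (nn_mul hA (nn_mul (nn_mul hB hD) hB)) hE) hB)
    have t6 : 0 ≤ (A * B * E * (B * D * B)).trace :=
      SMAux.trace_nn (nn_mul (nn_mul (nn_mul hA hB) hE) (nn_mul (nn_mul hB hD) hB))
    simp only [trCLM_apply]
    simp only [Matrix.neg_mul, Matrix.mul_neg, Matrix.add_mul, neg_add,
      Matrix.trace_add, Matrix.trace_neg, Matrix.mul_assoc]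
    simp only [Matrix.mul_assoc] at t1 t2 t3 t4 t5 t6
    linarith

/-! ### Good matrices and the main inequalities -/

def Good (c : ℝ) (W : Matrix (Fin n) (Fin n) ℝ) : Prop :=
  W.PosDef ∧ (W - c • 1).PosDef ∧ ∀ p q, p ≠ q → W p q ≤ 0

lemma Good.inv_nn {c : ℝ} {W : Matrix (Fin n) (Fin n) ℝ} (h : Good c W) :
    (∀ p q, 0 ≤ Ring.inverse W p q) ∧ (∀ p q, 0 ≤ Ring.inverse (W - c • 1) p q) := by
  constructor
  · intro p q
    rw [← Matrix.nonsing_inv_eq_ringInverse]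
    exact SMAux.inv_entry_nonneg h.1 h.2.2 p q
  · intro p q
    rw [← Matrix.nonsing_inv_eq_ringInverse]
    refine SMAux.inv_entry_nonneg h.2.1 ?_ p q
    intro a b hab
    have : (W - c • 1) a b = W a b := by
      simp [Matrix.sub_apply, Matrix.one_apply_ne hab]
    rw [this]
    exact h.2.2 a b hab

lemma Good.isUnit {c : ℝ} {W : Matrix (Fin n) (Fin n) ℝ} (h : Good c W) :
    IsUnit W ∧ IsUnit (W - c • 1) :=
  ⟨h.1.isUnit, h.2.1.isUnit⟩

lemma Good.add_diag {c : ℝ} {W : Matrix (Fin n) (Fin n) ℝ} (h : Good c W)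
    {d : Fin n → ℝ} (hd : ∀ p, 0 ≤ d p) {t : ℝ} (ht : 0 ≤ t) :
    Good c (W + t • Matrix.diagonal d) := by
  have hdiag : (t • Matrix.diagonal d : Matrix (Fin n) (Fin n) ℝ) =
      Matrix.diagonal (fun p => t * d p) := by
    ext p q
    rcases eq_or_ne p q with rfl | hpq
    · simp
    · simp [Matrix.diagonal_apply_ne _ hpq]
  have hpsd : (t • Matrix.diagonal d : Matrix (Fin n) (Fin n) ℝ).PosSemidef := by
    rw [hdiag]
    exact Matrix.posSemidef_diagonal_iff.mpr fun p => mul_nonneg ht (hd p)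
  refine ⟨h.1.add_posSemidef hpsd, ?_, ?_⟩
  · have : W + t • Matrix.diagonal d - c • 1 = (W - c • 1) + t • Matrix.diagonal d := by
      abel
    rw [this]
    exact h.2.1.add_posSemidef hpsd
  · intro p q hpq
    have : (W + t • Matrix.diagonal d) p q = W p q := by
      rw [hdiag]
      simp [Matrix.add_apply, Matrix.diagonal_apply_ne _ hpq]
    rw [this]
    exact h.2.2 p q hpq

lemma mRfun_nonneg {c : ℝ} {W E : Matrix (Fin n) (Fin n) ℝ} (h : Good c W)
    (hE : ∀ p q, 0 ≤ E p q) : 0 ≤ mRfun c E W := by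
  obtain ⟨hA, hB⟩ := h.inv_nn
  have t1 := SMAux.trace_nn (SMAux.mul_nn (SMAux.mul_nn (SMAux.mul_nn hA hE) hA) hB)
  have t2 := SMAux.trace_nn (SMAux.mul_nn (SMAux.mul_nn (SMAux.mul_nn hA hB) hE) hB)
  have : mRfun c E W = (Ring.inverse W * E * Ring.inverse W * Ring.inverse (W - c • 1)).trace
      + (Ring.inverse W * Ring.inverse (W - c • 1) * E * Ring.inverse (W - c • 1)).trace := rfl
  linarith

lemma tauR_nonneg {c : ℝ} {W : Matrix (Fin n) (Fin n) ℝ} (h : Good c W) :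
    0 ≤ tauR c W := by
  obtain ⟨hA, hB⟩ := h.inv_nn
  exact SMAux.trace_nn (SMAux.mul_nn hA hB)

/-- Monotonicity: adding a nonnegative diagonal decreases `tauR`. -/
lemma tauR_le {c : ℝ} {M : Matrix (Fin n) (Fin n) ℝ} (hM : Good c M)
    {d : Fin n → ℝ} (hd : ∀ p, 0 ≤ d p) :
    tauR c (M + Matrix.diagonal d) ≤ tauR c M := by
  set D := Matrix.diagonal d with hD
  have hG : ∀ t ∈ Set.Icc (0:ℝ) 1, Good c (M + t • D) := fun t ht =>
    hM.add_diag hd ht.1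
  have hder : ∀ t ∈ Set.Icc (0:ℝ) 1,
      HasDerivAt (fun x : ℝ => tauR c (M + x • D)) (-(mRfun c D (M + t • D))) t :=
    fun t ht => hasDerivAt_tauR c M D t (hG t ht).isUnit.1 (hG t ht).isUnit.2
  have hanti : AntitoneOn (fun x : ℝ => tauR c (M + x • D)) (Set.Icc 0 1) := by
    apply antitoneOn_of_deriv_nonpos (convex_Icc 0 1)
    · intro t ht
      exact (hder t ht).continuousAt.continuousWithinAt
    · rw [interior_Icc]
      intro t ht
      exact (hder t (Set.Ioo_subset_Icc_self ht)).differentiableAt.differentiableWithinAt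
    · rw [interior_Icc]
      intro t ht
      rw [(hder t (Set.Ioo_subset_Icc_self ht)).deriv]
      have hGt := hG t (Set.Ioo_subset_Icc_self ht)
      have := mRfun_nonneg hGt (SMAux.diag_nn hd)
      linarith
  have h01 := hanti (Set.left_mem_Icc.mpr zero_le_one) (Set.right_mem_Icc.mpr zero_le_one)
    zero_le_one
  simpa using h01

/-- Inner diminishing-returns step: `mRfun` decreases when the base grows. -/
lemma mRfun_le {c : ℝ} {M : Matrix (Fin n) (Fin n) ℝ} (hM : Good c M)
    {d e : Fin n → ℝ} (hd : ∀ p, 0 ≤ d p) (he : ∀ p, 0 ≤ e p) :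
    mRfun c (Matrix.diagonal e) (M + Matrix.diagonal d) ≤ mRfun c (Matrix.diagonal e) M := by
  set D := Matrix.diagonal d with hDdef
  set E := Matrix.diagonal e with hEdef
  have hG : ∀ t ∈ Set.Icc (0:ℝ) 1, Good c (M + t • D) := fun t ht =>
    hM.add_diag hd ht.1
  have hder : ∀ t ∈ Set.Icc (0:ℝ) 1, ∃ δ : ℝ, δ ≤ 0 ∧
      HasDerivAt (fun x : ℝ => mRfun c E (M + x • D)) δ t := by
    intro t ht
    obtain ⟨hA, hB⟩ := (hG t ht).inv_nn
    exact mR_deriv c M D E t (hG t ht).isUnit.1 (hG t ht).isUnit.2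
      (SMAux.diag_nn hd) (SMAux.diag_nn he) hA hB
  have hanti : AntitoneOn (fun x : ℝ => mRfun c E (M + x • D)) (Set.Icc 0 1) := by
    apply antitoneOn_of_deriv_nonpos (convex_Icc 0 1)
    · intro t ht
      obtain ⟨δ, _, hδ⟩ := hder t ht
      exact hδ.continuousAt.continuousWithinAt
    · rw [interior_Icc]
      intro t ht
      obtain ⟨δ, _, hδ⟩ := hder t (Set.Ioo_subset_Icc_self ht)
      exact hδ.differentiableAt.differentiableWithinAt
    · rw [interior_Icc]
      intro t ht
      obtain ⟨δ, hδ0, hδ⟩ := hder t (Set.Ioo_subset_Icc_self ht)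
      rw [hδ.deriv]
      exact hδ0
  have h01 := hanti (Set.left_mem_Icc.mpr zero_le_one) (Set.right_mem_Icc.mpr zero_le_one)
    zero_le_one
  simpa using h01

/-- Diminishing returns for `tauR`. -/
lemma tauR_dr {c : ℝ} {M : Matrix (Fin n) (Fin n) ℝ} (hM : Good c M)
    {d e : Fin n → ℝ} (hd : ∀ p, 0 ≤ d p) (he : ∀ p, 0 ≤ e p) :
    tauR c (M + Matrix.diagonal d) + tauR c (M + Matrix.diagonal e) ≤
      tauR c M + tauR c (M + Matrix.diagonal d + Matrix.diagonal e) := by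
  set D := Matrix.diagonal d with hDdef
  set E := Matrix.diagonal e with hEdef
  have hMD : Good c (M + D) := by
    have := hM.add_diag hd (zero_le_one (α := ℝ))
    rwa [one_smul] at this
  have hGy : ∀ y ∈ Set.Icc (0:ℝ) 1, Good c (M + y • E) := fun y hy =>
    hM.add_diag he hy.1
  have hGy' : ∀ y ∈ Set.Icc (0:ℝ) 1, Good c (M + D + y • E) := by
    intro y hy
    have := hMD.add_diag he hy.1
    exact this
  have hder : ∀ y ∈ Set.Icc (0:ℝ) 1,
      HasDerivAt (fun x : ℝ => tauR c (M + D + x • E) - tauR c (M + x • E))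
        (-(mRfun c E (M + D + y • E)) - -(mRfun c E (M + y • E))) y := by
    intro y hy
    exact (hasDerivAt_tauR c (M + D) E y (hGy' y hy).isUnit.1 (hGy' y hy).isUnit.2).sub
      (hasDerivAt_tauR c M E y (hGy y hy).isUnit.1 (hGy y hy).isUnit.2)
  have hmono : MonotoneOn (fun x : ℝ => tauR c (M + D + x • E) - tauR c (M + x • E))
      (Set.Icc 0 1) := by
    apply monotoneOn_of_deriv_nonneg (convex_Icc 0 1)
    · intro y hy
      exact (hder y hy).continuousAt.continuousWithinAt
    · rw [interior_Icc]
      intro y hy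
      exact (hder y (Set.Ioo_subset_Icc_self hy)).differentiableAt.differentiableWithinAt
    · rw [interior_Icc]
      intro y hy
      rw [(hder y (Set.Ioo_subset_Icc_self hy)).deriv]
      have hkey : mRfun c E (M + D + y • E) ≤ mRfun c E (M + y • E) := by
        have h1 : M + D + y • E = (M + y • E) + D := by abel
        rw [h1]
        exact mRfun_le (hGy y (Set.Ioo_subset_Icc_self hy)) hd he
      linarith
  have h01 := hmono (Set.left_mem_Icc.mpr zero_le_one) (Set.right_mem_Icc.mpr zero_le_one)
    zero_le_one
  simp only [zero_smul, add_zero, one_smul] at h01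
  linarith

end SMAux3B



namespace SMAux2

variable {n : ℕ}

lemma charpoly_isRoot_of_spectrum {N : Matrix (Fin n) (Fin n) ℝ} {μ : ℝ}
    (h : μ ∈ spectrum ℝ N) : N.charpoly.IsRoot μ := by
  have h1 : ¬ IsUnit (algebraMap ℝ (Matrix (Fin n) (Fin n) ℝ) μ - N) :=
    spectrum.mem_iff.mp h
  have h2 : (algebraMap ℝ (Matrix (Fin n) (Fin n) ℝ) μ - N).det = 0 := by
    by_contra hne
    exact h1 ((Matrix.isUnit_iff_isUnit_det _).mpr (isUnit_iff_ne_zero.mpr hne))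
  have h3 : N.charpoly.eval μ = (algebraMap ℝ (Matrix (Fin n) (Fin n) ℝ) μ - N).det := by
    rw [Matrix.charpoly, ← Polynomial.coe_evalRingHom, RingHom.map_det]
    congr 1
    ext p q
    rcases eq_or_ne p q with rfl | hpq
    · simp [Matrix.charmatrix_apply_eq, Algebra.algebraMap_eq_smul_one,
        Matrix.sub_apply, Matrix.smul_apply, Matrix.one_apply_eq]
    · simp [Matrix.charmatrix_apply_ne _ _ _ hpq, Algebra.algebraMap_eq_smul_one,
        Matrix.sub_apply, Matrix.smul_apply, Matrix.one_apply_ne hpq]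
  show N.charpoly.eval μ = 0
  rw [h3, h2]

lemma posDef_sub_smul_one {A : Matrix (Fin n) (Fin n) ℝ} (hA : A.IsHermitian) (c : ℝ)
    (h : ∀ μ : ℝ, μ ∈ spectrum ℝ A → c < μ) : (A - c • 1).PosDef := by
  have hone : ((c • 1 : Matrix (Fin n) (Fin n) ℝ)).IsHermitian := by
    show ((c • 1 : Matrix (Fin n) (Fin n) ℝ))ᴴ = c • 1
    rw [Matrix.conjTranspose_smul, Matrix.conjTranspose_one]
    simp
  have hW : (A - c • 1).IsHermitian := hA.sub hone
  have hshift : ∀ ν : ℝ, ν ∈ spectrum ℝ (A - c • 1) → ν + c ∈ spectrum ℝ A := by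
    intro ν hν
    rw [← Algebra.algebraMap_eq_smul_one, ← spectrum.sub_singleton_eq] at hν
    obtain ⟨a, ha, b, hb, hab⟩ := Set.mem_sub.mp hν
    rw [Set.mem_singleton_iff] at hb
    have : a = ν + c := by rw [hb] at hab; linarith
    rwa [← this]
  have heigpos : ∀ k, 0 < hW.eigenvalues k := by
    intro k
    have h1 : hW.eigenvalues k ∈ spectrum ℝ (A - c • 1) :=
      hW.eigenvalues_mem_spectrum_real k
    have h2 := h _ (hshift _ h1)
    linarith
  have hpsd : (A - c • 1).PosSemidef :=
    hW.posSemidef_iff_eigenvalues_nonneg.mpr fun k => (heigpos k).le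
  have hUnit : IsUnit (A - c • 1) := by
    by_contra hnu
    have h0 : (0:ℝ) ∈ spectrum ℝ (A - c • 1) := by
      rw [spectrum.mem_iff]
      intro hcon
      rw [map_zero, zero_sub, IsUnit.neg_iff _] at hcon
      exact hnu hcon
    have := h _ (hshift 0 h0)
    linarith
  refine Matrix.PosDef.of_dotProduct_mulVec_pos hW fun x hx => ?_
  have hinj : Function.Injective ((A - c • 1).mulVec) :=
    Matrix.mulVec_injective_iff_isUnit.mpr hUnit
  have h0 : (A - c • 1) *ᵥ x ≠ 0 := by
    intro hc0
    apply hx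
    apply hinj
    rw [hc0, Matrix.mulVec_zero]
  have h4 := hpsd.dotProduct_mulVec_nonneg x
  have h5 := hpsd.dotProduct_mulVec_zero_iff x
  exact lt_of_le_of_ne h4 fun hEq => h0 (h5.mp hEq.symm)

end SMAux2



/-- Lemma 1: the set function `f(∅) = 0`,
`f(S) = C − tr((b₁Q_S)⁻¹(b₂Q_S − b₃I)⁻¹)` for nonempty `S`, with
`C = 2·max_{s ∈ V} tr((b₁Q_{{s}})⁻¹(b₂Q_{{s}} − b₃I)⁻¹)`, is non-decreasing
and submodular, where `Q_S = L + D_κ D_S` for the weighted Laplacian `L` of a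
connected graph and positive leader weights `κ`. -/
theorem setFunction_general23_monotone_submodular (n : ℕ) (hn : 1 ≤ n)
    (L : Matrix (Fin n) (Fin n) ℝ)
    (hLsymm : L.IsSymm)
    (hLoff : ∀ i j, i ≠ j → L i j ≤ 0)
    (hLrow : ∀ i, ∑ j, L i j = 0)
    (hLker : ∀ x : Fin n → ℝ, L.mulVec x = 0 ↔ ∃ c : ℝ, x = fun _ => c)
    (κ : Fin n → ℝ) (hκ : ∀ i, 0 < κ i)
    (Q : Finset (Fin n) → Matrix (Fin n) (Fin n) ℝ)
    (hQdef : ∀ S, Q S = L + Matrix.diagonal fun i => if i ∈ S then κ i else 0)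
    (hQpos : ∀ S : Finset (Fin n), S.Nonempty → (Q S).PosDef)
    (b₁ b₂ b₃ : ℝ) (hb₁ : 0 < b₁) (hb₂ : 0 < b₂) (hb₃ : 0 ≤ b₃)
    (heig : ∀ S : Finset (Fin n), S.Nonempty →
      ∀ lam ∈ (Q S).charpoly.roots, b₃ < b₂ * lam)
    (mx : ℝ)
    (hmx : IsGreatest {x : ℝ | ∃ s : Fin n, x =
      Matrix.trace ((b₁ • Q {s})⁻¹ *
        (b₂ • Q {s} - b₃ • (1 : Matrix (Fin n) (Fin n) ℝ))⁻¹)} mx)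
    (f : Finset (Fin n) → ℝ)
    (hf0 : f ∅ = 0)
    (hf : ∀ S : Finset (Fin n), S.Nonempty →
      f S = 2 * mx - Matrix.trace ((b₁ • Q S)⁻¹ *
        (b₂ • Q S - b₃ • (1 : Matrix (Fin n) (Fin n) ℝ))⁻¹)) :
    (∀ A B : Finset (Fin n), A ⊆ B → f A ≤ f B) ∧
    (∀ A B : Finset (Fin n), f (A ∪ B) + f (A ∩ B) ≤ f A + f B) := by
  classical
  set c : ℝ := b₃ / b₂ with hc
  -- `Q S` is a "good" matrix for every nonempty `S`
  have hQoff : ∀ (S : Finset (Fin n)) (p q : Fin n), p ≠ q → Q S p q ≤ 0 := by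
    intro S p q hpq
    rw [hQdef]
    simp only [Matrix.add_apply, Matrix.diagonal_apply_ne _ hpq, add_zero]
    exact hLoff p q hpq
  have hGoodQ : ∀ S : Finset (Fin n), S.Nonempty → SMAux3B.Good c (Q S) := by
    intro S hS
    refine ⟨hQpos S hS, ?_, hQoff S⟩
    apply SMAux2.posDef_sub_smul_one (hQpos S hS).isHermitian
    intro μ hμ
    have hroot := SMAux2.charpoly_isRoot_of_spectrum hμ
    have hmem : μ ∈ (Q S).charpoly.roots :=
      Polynomial.mem_roots'.mpr ⟨(Matrix.charpoly_monic _).ne_zero, hroot⟩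
    have hb := heig S hS μ hmem
    rw [hc]
    rw [div_lt_iff₀ hb₂]
    linarith
  -- the set function `g`
  set g : Finset (Fin n) → ℝ := fun S =>
    Matrix.trace ((b₁ • Q S)⁻¹ *
      (b₂ • Q S - b₃ • (1 : Matrix (Fin n) (Fin n) ℝ))⁻¹) with hg
  have hfg : ∀ S : Finset (Fin n), S.Nonempty → f S = 2 * mx - g S := fun S hS => hf S hS
  have hgtau : ∀ S : Finset (Fin n), S.Nonempty →
      g S = (b₁⁻¹ * b₂⁻¹) * SMAux3B.tauR c (Q S) := by
    intro S hS
    have hG := hGoodQ S hS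
    have hdet1 : IsUnit (Q S).det := (Matrix.isUnit_iff_isUnit_det _).mp hG.1.isUnit
    have hdet2 : IsUnit (Q S - c • 1).det := (Matrix.isUnit_iff_isUnit_det _).mp hG.2.1.isUnit
    have h1 : (b₁ • Q S)⁻¹ = b₁⁻¹ • (Q S)⁻¹ := by
      apply Matrix.inv_eq_right_inv
      rw [Matrix.smul_mul, Matrix.mul_smul, smul_smul, mul_inv_cancel₀ hb₁.ne', one_smul,
        Matrix.mul_nonsing_inv _ hdet1]
    have h2 : b₂ • Q S - b₃ • (1 : Matrix (Fin n) (Fin n) ℝ) = b₂ • (Q S - c • 1) := by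
      rw [smul_sub, smul_smul]
      congr 2
      rw [hc]
      field_simp
    have h3 : (b₂ • (Q S - c • 1))⁻¹ = b₂⁻¹ • (Q S - c • 1)⁻¹ := by
      apply Matrix.inv_eq_right_inv
      rw [Matrix.smul_mul, Matrix.mul_smul, smul_smul, mul_inv_cancel₀ hb₂.ne', one_smul,
        Matrix.mul_nonsing_inv _ hdet2]
    show Matrix.trace ((b₁ • Q S)⁻¹ *
        (b₂ • Q S - b₃ • (1 : Matrix (Fin n) (Fin n) ℝ))⁻¹) = _
    rw [h1, h2, h3, Matrix.smul_mul, Matrix.mul_smul, Matrix.trace_smul, Matrix.trace_smul,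
      Matrix.nonsing_inv_eq_ringInverse, Matrix.nonsing_inv_eq_ringInverse]
    show b₁⁻¹ * (b₂⁻¹ * Matrix.trace (Ring.inverse (Q S) * Ring.inverse (Q S - c • 1))) = _
    rw [SMAux3B.tauR]
    ring
  -- diagonal increment vectors
  set dv : Finset (Fin n) → Fin n → ℝ := fun S p => if p ∈ S then κ p else 0 with hdv
  have hdvnn : ∀ (S : Finset (Fin n)) (p : Fin n), 0 ≤ dv S p := by
    intro S p
    dsimp [dv]
    split
    · exact (hκ p).le
    · exact le_refl 0
  have hQsub : ∀ A B : Finset (Fin n), A ⊆ B →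
      Q B = Q A + Matrix.diagonal (dv (B \ A)) := by
    intro A B hAB
    rw [hQdef, hQdef, add_assoc, Matrix.diagonal_add]
    refine congrArg (L + ·) (congrArg Matrix.diagonal ?_)
    funext p
    dsimp [dv]
    by_cases h1 : p ∈ A
    · have h2 : p ∈ B := hAB h1
      simp [h1, h2, Finset.mem_sdiff]
    · by_cases h2 : p ∈ B <;> simp [h1, h2, Finset.mem_sdiff]
  have hQA : ∀ A B : Finset (Fin n),
      Q A = Q (A ∩ B) + Matrix.diagonal (dv (A \ B)) := by
    intro A B
    have h := hQsub (A ∩ B) A Finset.inter_subset_left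
    rwa [Finset.sdiff_inter_self_left] at h
  have hQB : ∀ A B : Finset (Fin n),
      Q B = Q (A ∩ B) + Matrix.diagonal (dv (B \ A)) := by
    intro A B
    have h := hQsub (A ∩ B) B Finset.inter_subset_right
    have h2 : B \ (A ∩ B) = B \ A := by
      rw [Finset.inter_comm, Finset.sdiff_inter_self_left]
    rwa [h2] at h
  have hQU : ∀ A B : Finset (Fin n),
      Q (A ∪ B) = Q (A ∩ B) + Matrix.diagonal (dv (A \ B)) + Matrix.diagonal (dv (B \ A)) := by
    intro A B
    rw [hQdef, hQdef, add_assoc, add_assoc, Matrix.diagonal_add, Matrix.diagonal_add]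
    refine congrArg (L + ·) (congrArg Matrix.diagonal ?_)
    funext p
    dsimp [dv]
    by_cases h1 : p ∈ A <;> by_cases h2 : p ∈ B <;>
      simp [h1, h2, Finset.mem_sdiff, Finset.mem_union, Finset.mem_inter]
  -- nonnegativity and monotonicity of g
  have hk : (0:ℝ) ≤ b₁⁻¹ * b₂⁻¹ := by positivity
  have hgnn : ∀ S : Finset (Fin n), S.Nonempty → 0 ≤ g S := by
    intro S hS
    rw [hgtau S hS]
    exact mul_nonneg hk (SMAux3B.tauR_nonneg (hGoodQ S hS))
  have hgmono : ∀ A B : Finset (Fin n), A.Nonempty → A ⊆ B → g B ≤ g A := by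
    intro A B hA hAB
    have hB : B.Nonempty := hA.mono hAB
    rw [hgtau A hA, hgtau B hB, hQsub A B hAB]
    exact mul_le_mul_of_nonneg_left
      (SMAux3B.tauR_le (hGoodQ A hA) (hdvnn (B \ A))) hk
  have hgsuper : ∀ A B : Finset (Fin n), (A ∩ B).Nonempty →
      g A + g B ≤ g (A ∪ B) + g (A ∩ B) := by
    intro A B hI
    have hA : A.Nonempty := hI.mono Finset.inter_subset_left
    have hB : B.Nonempty := hI.mono Finset.inter_subset_right
    have hU : (A ∪ B).Nonempty := hA.mono Finset.subset_union_left
    rw [hgtau A hA, hgtau B hB, hgtau _ hU, hgtau _ hI]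
    have key := SMAux3B.tauR_dr (hGoodQ (A ∩ B) hI) (hdvnn (A \ B)) (hdvnn (B \ A))
    rw [← hQU A B, ← hQA A B, ← hQB A B] at key
    nlinarith [key, hk]
  -- bounds on f
  have hfmx : ∀ S : Finset (Fin n), S.Nonempty → mx ≤ f S := by
    intro S hS
    obtain ⟨s, hs⟩ := hS
    have h1 : g S ≤ g {s} :=
      hgmono {s} S (Finset.singleton_nonempty s) (Finset.singleton_subset_iff.mpr hs)
    have h2 : g {s} ≤ mx := hmx.2 ⟨s, rfl⟩
    rw [hfg S ⟨s, hs⟩]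
    linarith
  have hmx0 : (0:ℝ) ≤ mx := by
    obtain ⟨s, hs⟩ := hmx.1
    have := hgnn {s} (Finset.singleton_nonempty s)
    rw [hs]
    exact this
  have hf2mx : ∀ S : Finset (Fin n), S.Nonempty → f S ≤ 2 * mx := by
    intro S hS
    have := hgnn S hS
    rw [hfg S hS]
    linarith
  constructor
  · -- monotone
    intro A B hAB
    rcases Finset.eq_empty_or_nonempty A with rfl | hA
    · rw [hf0]
      rcases Finset.eq_empty_or_nonempty B with rfl | hB
      · rw [hf0]
      · linarith [hfmx B hB, hmx0]
    · have hB : B.Nonempty := hA.mono hAB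
      rw [hfg A hA, hfg B hB]
      have := hgmono A B hA hAB
      linarith
  · -- submodular
    intro A B
    rcases Finset.eq_empty_or_nonempty A with rfl | hA
    · rw [Finset.empty_union, Finset.empty_inter, hf0]
      linarith
    · rcases Finset.eq_empty_or_nonempty B with rfl | hB
      · rw [Finset.union_empty, Finset.inter_empty, hf0]
      · have hU : (A ∪ B).Nonempty := hA.mono Finset.subset_union_left
        rcases Finset.eq_empty_or_nonempty (A ∩ B) with hI | hI
        · rw [hI, hf0]
          linarith [hf2mx (A ∪ B) hU, hfmx A hA, hfmx B hB]
        · rw [hfg A hA, hfg B hB, hfg _ hU, hfg _ hI]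
          have := hgsuper A B hI
          linarith
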